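/- Let μ > 0, α < 0, N a positive integer, and ω > α²/N². Set a⁰(ω) = (1/(μ√ω)) arctanh(|α|/(N√ω)). Then the squared L² norm of the N-tail state satisfies M(ω) := N ∫₀^∞ φ_{ω,−a⁰(ω)}(x)² dx = (N (μ+1)^{1/μ} / μ) · ω^{1/μ − 1/2} · ∫_{|α|/(N√ω)}^{1} (1 − t²)^{1/μ − 1} dt. -/

import Mathlib

open MeasureTheory Set intervalIntegral

/-- The soliton profile `φ_{ω,a}(x) = ((μ+1)ω)^{1/(2μ)} sech^{1/μ}(μ√ω (x − a))`. -/
noncomputable def solitonProfile (μ ω a : ℝ) (x : ℝ) : ℝ :=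
  ((μ + 1) * ω) ^ (1 / (2 * μ)) *
    (1 / Real.cosh (μ * Real.sqrt ω * (x - a))) ^ (1 / μ)

/-- The inverse hyperbolic tangent. -/
noncomputable def arctanh (x : ℝ) : ℝ := (1 / 2) * Real.log ((1 + x) / (1 - x))

lemma tanh_eq' (x : ℝ) : Real.tanh x = 1 - 2 / (Real.exp (2 * x) + 1) := by
  rw [Real.tanh_eq_sinh_div_cosh, Real.sinh_eq, Real.cosh_eq,
    show (2:ℝ) * x = x + x by ring, Real.exp_add, Real.exp_neg]
  have h := Real.exp_pos x
  have h1 : Real.exp x + (Real.exp x)⁻¹ > 0 := by positivity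
  have h2 : Real.exp x * Real.exp x + 1 > 0 := by positivity
  field_simp
  ring

lemma tanh_strictMono : StrictMono Real.tanh := by
  intro a b hab
  rw [tanh_eq', tanh_eq']
  have h : Real.exp (2 * a) < Real.exp (2 * b) := Real.exp_lt_exp.2 (by linarith)
  have ha := Real.exp_pos (2 * a)
  have h2 : 2 / (Real.exp (2 * b) + 1) < 2 / (Real.exp (2 * a) + 1) := by
    gcongr
  linarith

lemma tanh_lt_one' (x : ℝ) : Real.tanh x < 1 := by
  rw [tanh_eq']
  have := Real.exp_pos (2 * x)
  have : 0 < 2 / (Real.exp (2 * x) + 1) := by positivity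
  linarith

lemma tanh_arctanh' {s : ℝ} (h1 : -1 < s) (h2 : s < 1) : Real.tanh (arctanh s) = s := by
  have hr : 0 < (1 + s) / (1 - s) := div_pos (by linarith) (by linarith)
  rw [tanh_eq', arctanh, show 2 * (1 / 2 * Real.log ((1 + s) / (1 - s)))
    = Real.log ((1 + s) / (1 - s)) by ring, Real.exp_log hr]
  have hs : (1:ℝ) - s ≠ 0 := by linarith
  have : (1 + s) / (1 - s) + 1 = 2 / (1 - s) := by field_simp; ring
  rw [this]
  field_simp
  ring

lemma one_sub_tanh_sq (y : ℝ) : 1 - Real.tanh y ^ 2 = (1 / Real.cosh y) ^ 2 := by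
  have h := Real.cosh_pos y
  have h2 := Real.cosh_sq_sub_sinh_sq y
  rw [Real.tanh_eq_sinh_div_cosh]
  field_simp
  linarith

lemma hasDerivAt_tanh' (y : ℝ) : HasDerivAt Real.tanh (1 / Real.cosh y ^ 2) y := by
  have h := (Real.hasDerivAt_sinh y).div (Real.hasDerivAt_cosh y) (ne_of_gt (Real.cosh_pos y))
  have he : Real.tanh = fun x => Real.sinh x / Real.cosh x :=
    funext fun x => Real.tanh_eq_sinh_div_cosh x
  rw [he]
  refine h.congr_deriv ?_
  have h2 := Real.cosh_sq_sub_sinh_sq y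
  have hc := Real.cosh_pos y
  rw [div_left_inj' (by positivity)]
  nlinarith

theorem stmt_9 (μ α : ℝ) (hμ : 0 < μ) (hα : α < 0) (N : ℕ) (hN : 0 < N)
    (ω : ℝ) (hω : ω > α ^ 2 / (N : ℝ) ^ 2)
    (a₀ : ℝ) (ha₀ : a₀ = 1 / (μ * Real.sqrt ω) * arctanh (|α| / (N * Real.sqrt ω))) :
    -- the squared L² norm of the N-tail state `Ψ⁰_ω`
    (N : ℝ) * (∫ x in Ioi (0 : ℝ), (solitonProfile μ ω (-a₀) x) ^ 2)
      = ((N : ℝ) * (μ + 1) ^ (1 / μ) / μ) * ω ^ (1 / μ - 1 / 2) *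
        ∫ t in (|α| / (N * Real.sqrt ω))..1, (1 - t ^ 2) ^ (1 / μ - 1) := by
  have hNpos : (0:ℝ) < N := Nat.cast_pos.2 hN
  have hαne : α ≠ 0 := ne_of_lt hα
  have hω0 : 0 < ω := lt_trans (by positivity) hω
  have hsd : 0 < Real.sqrt ω := Real.sqrt_pos.2 hω0
  set c := μ * Real.sqrt ω with hcdef
  have hcpos : 0 < c := mul_pos hμ hsd
  set s₀ := |α| / (N * Real.sqrt ω) with hs₀def
  have hs₀pos : 0 < s₀ := div_pos (abs_pos.2 hαne) (mul_pos hNpos hsd)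
  have hs₀lt : s₀ < 1 := by
    rw [hs₀def, div_lt_one (mul_pos hNpos hsd)]
    have h1 : α ^ 2 < (N:ℝ) ^ 2 * ω := by
      rw [gt_iff_lt, div_lt_iff₀ (by positivity)] at hω; linarith
    have h2 : ((N:ℝ) * Real.sqrt ω) ^ 2 = (N:ℝ) ^ 2 * ω := by
      rw [mul_pow, Real.sq_sqrt hω0.le]
    have h3 : |α| ^ 2 < ((N:ℝ) * Real.sqrt ω) ^ 2 := by rw [h2, sq_abs]; exact h1
    exact lt_of_pow_lt_pow_left₀ 2 (by positivity) h3
  set f : ℝ → ℝ := fun x => Real.tanh (c * (x + a₀)) with hfdef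
  have hca : c * a₀ = arctanh s₀ := by
    rw [ha₀]; field_simp
  have hf0 : f 0 = s₀ := by
    rw [hfdef]; simp only [zero_add]
    rw [hca, tanh_arctanh' (by linarith) hs₀lt]
  have hfm : StrictMono f := by
    intro x y hxy
    exact tanh_strictMono (by nlinarith)
  have hinj : InjOn f (Ioi 0) := hfm.injective.injOn
  have himg : f '' Ioi 0 = Ioo s₀ 1 := by
    ext t
    constructor
    · rintro ⟨x, hx, rfl⟩
      exact ⟨hf0 ▸ hfm (mem_Ioi.1 hx), tanh_lt_one' _⟩
    · rintro ⟨ht1, ht2⟩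
      refine ⟨arctanh t / c - a₀, ?_, ?_⟩
      · have h3 : Real.tanh (arctanh s₀) < Real.tanh (arctanh t) := by
          rw [tanh_arctanh' (by linarith) hs₀lt, tanh_arctanh' (by linarith) ht2]
          exact ht1
        have h4 := tanh_strictMono.lt_iff_lt.1 h3
        rw [mem_Ioi, sub_pos, lt_div_iff₀ hcpos]
        calc a₀ * c = c * a₀ := mul_comm _ _
          _ = arctanh s₀ := hca
          _ < arctanh t := h4
      · show Real.tanh (c * ((arctanh t / c - a₀) + a₀)) = t
        have hcc : c * ((arctanh t / c - a₀) + a₀) = arctanh t := by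
          field_simp
          ring
        rw [hcc, tanh_arctanh' (by linarith) ht2]
  have hder : ∀ x ∈ Ioi (0:ℝ),
      HasDerivWithinAt f (c * (1 / Real.cosh (c * (x + a₀)) ^ 2)) (Ioi 0) x := by
    intro x _
    have h1 : HasDerivAt (fun x : ℝ => c * (x + a₀)) c x := by
      have h0 := ((hasDerivAt_id x).add_const a₀).const_mul c
      rw [mul_one] at h0
      exact h0
    have h2 := (hasDerivAt_tanh' (c * (x + a₀))).comp x h1
    rw [mul_comm] at h2
    exact (h2 : HasDerivAt f _ x).hasDerivWithinAt
  have key := integral_image_eq_integral_abs_deriv_smul measurableSet_Ioi hder hinj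
    (fun t => (1 - t ^ 2) ^ (1 / μ - 1))
  rw [himg] at key
  -- pointwise simplification of the substituted integrand
  have hpt : ∀ x : ℝ, |c * (1 / Real.cosh (c * (x + a₀)) ^ 2)| •
      ((1 - f x ^ 2) ^ (1 / μ - 1))
      = c * (1 / Real.cosh (c * (x + a₀))) ^ ((2:ℝ) / μ) := by
    intro x
    set y := c * (x + a₀) with hy
    have hcosh := Real.cosh_pos y
    have ha : (0:ℝ) < 1 / Real.cosh y := by positivity
    have habs : |c * (1 / Real.cosh y ^ 2)| = c * (1 / Real.cosh y) ^ (2:ℕ) := by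
      rw [abs_of_pos (by positivity), div_pow, one_pow]
    rw [smul_eq_mul, habs, hfdef]
    show c * (1 / Real.cosh y) ^ (2:ℕ) * (1 - Real.tanh y ^ 2) ^ (1 / μ - 1) = _
    rw [one_sub_tanh_sq]
    rw [← Real.rpow_natCast (1 / Real.cosh y) 2, ← Real.rpow_mul ha.le]
    rw [mul_assoc, ← Real.rpow_add ha]
    congr 1
    push_cast
    field_simp
    ring
  have hpt2 : ∀ x : ℝ, (solitonProfile μ ω (-a₀) x) ^ 2
      = ((μ + 1) * ω) ^ ((1:ℝ) / μ) * (1 / Real.cosh (c * (x + a₀))) ^ ((2:ℝ) / μ) := by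
    intro x
    have hμω : (0:ℝ) < (μ + 1) * ω := by positivity
    have ha : (0:ℝ) < 1 / Real.cosh (c * (x + a₀)) := by positivity
    rw [solitonProfile, sub_neg_eq_add, mul_pow]
    congr 1
    · rw [← Real.rpow_natCast (((μ+1)*ω) ^ (1 / (2*μ))) 2, ← Real.rpow_mul hμω.le]
      congr 1
      push_cast
      field_simp
    · rw [← Real.rpow_natCast ((1 / Real.cosh (c * (x + a₀))) ^ (1/μ)) 2,
        ← Real.rpow_mul ha.le]
      congr 1
      push_cast
      ring
  -- rewrite both integrals
  simp only [hpt] at key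
  rw [intervalIntegral.integral_of_le hs₀lt.le, integral_Ioc_eq_integral_Ioo, key,
    MeasureTheory.integral_const_mul]
  have hL : ∫ x in Ioi (0:ℝ), (solitonProfile μ ω (-a₀) x) ^ 2
      = ((μ + 1) * ω) ^ ((1:ℝ) / μ) *
        ∫ x in Ioi (0:ℝ), (1 / Real.cosh (c * (x + a₀))) ^ ((2:ℝ) / μ) := by
    simp only [hpt2]
    rw [MeasureTheory.integral_const_mul]
  rw [hL]
  -- now pure algebra relating constants
  have hsplit : ((μ + 1) * ω) ^ ((1:ℝ) / μ) = (μ + 1) ^ ((1:ℝ) / μ) * ω ^ ((1:ℝ) / μ) :=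
    Real.mul_rpow (by positivity) hω0.le
  have hωsplit : ω ^ ((1:ℝ) / μ) = ω ^ ((1:ℝ) / μ - 1 / 2) * Real.sqrt ω := by
    rw [Real.sqrt_eq_rpow, ← Real.rpow_add hω0]
    congr 1
    ring
  rw [hsplit, hωsplit]
  have hμne : μ ≠ 0 := ne_of_gt hμ
  field_simp
  ring
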